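/- Let $\Psi=e^\psi-1$ be an Orlicz function, strictly increasing, satisfying the condition (HJ): there exists $K>0$ such that $\psi(su)\le K(s\ln(1+s)+s\psi(u))$ for all $s,u\ge K$. Then there exists $\widehat{K}>0$ such that $\widehat{K}\ln(1+x)\,\psi^{-1}(xy)\ge x\,\psi^{-1}(y)$ for all $x,y\ge\widehat{K}$. -/

import Mathlib

open MeasureTheory ProbabilityTheory

/-- An Orlicz function: convex, strictly increasing on `[0,∞)`, vanishing at `0`. -/
def IsOrlicz (Ψ : ℝ → ℝ) : Prop :=
  ConvexOn ℝ (Set.Ici 0) Ψ ∧ StrictMonoOn Ψ (Set.Ici 0) ∧ Ψ 0 = 0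

/-- The associated exponent `ψ` with `Ψ = e^ψ - 1`. -/
noncomputable def orliczExp (Ψ : ℝ → ℝ) (x : ℝ) : ℝ := Real.log (1 + Ψ x)

/-- The Orlicz (Luxemburg) norm of a Banach-space-valued random variable. -/
noncomputable def orliczNorm {Ω : Type*} [MeasurableSpace Ω] (μ : Measure Ω)
    (Ψ : ℝ → ℝ) {F : Type*} [NormedAddCommGroup F] (X : Ω → F) : ℝ :=
  sInf {a : ℝ | 0 < a ∧ ∫⁻ ω, ENNReal.ofReal (Ψ (‖X ω‖ / a)) ∂μ ≤ 1}

/-- `X` has finite Orlicz norm. -/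
def OrliczFinite {Ω : Type*} [MeasurableSpace Ω] (μ : Measure Ω)
    (Ψ : ℝ → ℝ) {F : Type*} [NormedAddCommGroup F] (X : Ω → F) : Prop :=
  ∃ a : ℝ, 0 < a ∧ ∫⁻ ω, ENNReal.ofReal (Ψ (‖X ω‖ / a)) ∂μ ≤ 1

/-- Condition (HJ): `ψ(su) ≤ K (s ln(1+s) + s ψ(u))` for all `s, u ≥ K`. -/
def HJCond (Ψ : ℝ → ℝ) : Prop :=
  ∃ K > (0:ℝ), ∀ s u : ℝ, K ≤ s → K ≤ u →
    orliczExp Ψ (s * u) ≤ K * (s * Real.log (1 + s) + s * orliczExp Ψ u)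

/-- A Rademacher (symmetric ±1) random variable. -/
def IsRademacher {Ω : Type*} [MeasurableSpace Ω] (μ : Measure Ω) (ε : Ω → ℝ) : Prop :=
  μ {ω | ε ω = 1} = 1/2 ∧ μ {ω | ε ω = -1} = 1/2

set_option maxHeartbeats 1000000 in
/-- If `Ψ` satisfies (HJ), then `K̂ ln(1+x) ψ⁻¹(xy) ≥ x ψ⁻¹(y)` for `x, y ≥ K̂`. -/
theorem stmt2 {Ψ ψinv : ℝ → ℝ} (hΨ : IsOrlicz Ψ) (hHJ : HJCond Ψ)
    (hinv1 : ∀ x ≥ (0:ℝ), ψinv (orliczExp Ψ x) = x)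
    (hinv2 : ∀ y ≥ (0:ℝ), orliczExp Ψ (ψinv y) = y) :
    ∃ Khat > (0:ℝ), ∀ x y : ℝ, Khat ≤ x → Khat ≤ y →
      x * ψinv y ≤ Khat * Real.log (1 + x) * ψinv (x * y) := by
  obtain ⟨hconv, hmono, h0⟩ := hΨ
  obtain ⟨K₀, hK₀, hHJ₀⟩ := hHJ
  -- basic facts about Ψ and ψ
  have hΨ0 : ∀ x : ℝ, 0 ≤ x → 0 ≤ Ψ x := by
    intro x hx
    have := hmono.monotoneOn (Set.mem_Ici.2 le_rfl) (Set.mem_Ici.2 hx) hx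
    linarith [this, h0.le, h0.ge]
  have hΨpos : ∀ x : ℝ, 0 < x → 0 < Ψ x := by
    intro x hx
    have := hmono (Set.mem_Ici.2 le_rfl) (Set.mem_Ici.2 hx.le) hx
    linarith
  have hψnonneg : ∀ x : ℝ, 0 ≤ x → 0 ≤ orliczExp Ψ x := by
    intro x hx
    exact Real.log_nonneg (by linarith [hΨ0 x hx])
  have hψmono : ∀ a b : ℝ, 0 ≤ a → 0 ≤ b → a < b → orliczExp Ψ a < orliczExp Ψ b := by
    intro a b ha hb hab
    have := hmono (Set.mem_Ici.2 ha) (Set.mem_Ici.2 hb) hab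
    exact Real.log_lt_log (by linarith [hΨ0 a ha]) (by linarith)
  -- upgrade the HJ constant to `K := max K₀ 1 ≥ 1`
  obtain ⟨K, hKdef⟩ : ∃ K : ℝ, K = max K₀ 1 := ⟨_, rfl⟩
  have hK1 : (1:ℝ) ≤ K := hKdef ▸ le_max_right _ _
  have hKpos : (0:ℝ) < K := by linarith
  have hHJK : ∀ s u : ℝ, K ≤ s → K ≤ u →
      orliczExp Ψ (s * u) ≤ K * (s * Real.log (1 + s) + s * orliczExp Ψ u) := by
    intro s u hs hu
    have hK₀K : K₀ ≤ K := hKdef ▸ le_max_left _ _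
    have h1 := hHJ₀ s u (le_trans hK₀K hs) (le_trans hK₀K hu)
    have hsp : (0:ℝ) < s := lt_of_lt_of_le hKpos hs
    have h2 : 0 ≤ Real.log (1 + s) := Real.log_nonneg (by linarith)
    have h3 : 0 ≤ orliczExp Ψ u := hψnonneg u (by linarith)
    have hbr : 0 ≤ s * Real.log (1 + s) + s * orliczExp Ψ u :=
      add_nonneg (mul_nonneg hsp.le h2) (mul_nonneg hsp.le h3)
    calc orliczExp Ψ (s * u) ≤ K₀ * (s * Real.log (1 + s) + s * orliczExp Ψ u) := h1
      _ ≤ K * (s * Real.log (1 + s) + s * orliczExp Ψ u) :=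
          mul_le_mul_of_nonneg_right hK₀K hbr
  -- unboundedness of ψ and the key inverse lower bound
  have hΨ1 : 0 < Ψ 1 := hΨpos 1 one_pos
  have hexists : ∀ y : ℝ, orliczExp Ψ K ≤ y → K ≤ ψinv y := by
    intro y hy
    -- pick M with ψ M ≥ y
    obtain ⟨M, hMdef⟩ : ∃ M : ℝ, M = max K (Real.exp y / Ψ 1) := ⟨_, rfl⟩
    have hMK : K ≤ M := hMdef ▸ le_max_left _ _
    have hM1 : (1:ℝ) ≤ M := le_trans hK1 hMK
    have hMpos : (0:ℝ) < M := by linarith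
    have hconvM : Ψ 1 ≤ Ψ M / M := by
      have ha : (0:ℝ) ≤ 1 - 1/M := by
        have : 1/M ≤ 1 := by rw [div_le_one hMpos]; exact hM1
        linarith
      have hb : (0:ℝ) ≤ 1/M := by positivity
      have hab : (1 - 1/M) + 1/M = 1 := by ring
      have h2 := hconv.2 (Set.mem_Ici.2 (le_refl (0:ℝ))) (Set.mem_Ici.2 hMpos.le) ha hb hab
      have h3 : (1 - 1/M) • (0:ℝ) + (1/M) • M = 1 := by
        simp only [smul_eq_mul]
        field_simp
        ring
      rw [h3, h0] at h2
      simp only [smul_eq_mul] at h2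
      calc Ψ 1 ≤ (1 - 1/M) * 0 + (1/M) * Ψ M := h2
        _ = Ψ M / M := by ring
    have hΨM : Real.exp y ≤ Ψ M := by
      have h4 : Real.exp y / Ψ 1 ≤ M := hMdef ▸ le_max_right _ _
      have h5 : Real.exp y ≤ M * Ψ 1 := by
        rw [div_le_iff₀ hΨ1] at h4; linarith
      have h6 : M * Ψ 1 ≤ Ψ M := by
        rw [le_div_iff₀ hMpos] at hconvM; linarith
      linarith
    have hψM : y ≤ orliczExp Ψ M := by
      have : Real.exp y ≤ 1 + Ψ M := by linarith
      calc y = Real.log (Real.exp y) := (Real.log_exp y).symm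
        _ ≤ Real.log (1 + Ψ M) := Real.log_le_log (Real.exp_pos y) this
    -- continuity of ψ on [K, M]
    have hcontΨ : ContinuousOn Ψ (Set.Icc K M) := by
      have h7 : ContinuousOn Ψ (interior (Set.Ici (0:ℝ))) := hconv.continuousOn_interior
      rw [interior_Ici] at h7
      exact h7.mono (fun z hz => by
        simp only [Set.mem_Ioi]
        have := hz.1
        linarith)
    have hcontψ : ContinuousOn (fun z => orliczExp Ψ z) (Set.Icc K M) := by
      apply ContinuousOn.log
      · exact continuousOn_const.add hcontΨ
      · intro z hz
        have : 0 ≤ Ψ z := hΨ0 z (by linarith [hz.1])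
        linarith
    have hIVT := intermediate_value_Icc hMK hcontψ
    have hyIcc : y ∈ Set.Icc (orliczExp Ψ K) (orliczExp Ψ M) := ⟨hy, hψM⟩
    obtain ⟨x₀, hx₀, hx₀y⟩ := hIVT hyIcc
    have hx₀y' : orliczExp Ψ x₀ = y := hx₀y
    have hx₀0 : (0:ℝ) ≤ x₀ := by linarith [hx₀.1]
    have h8 := hinv1 x₀ hx₀0
    rw [hx₀y'] at h8
    rw [h8]
    exact hx₀.1
  -- monotonicity of ψinv on [ψ K, ∞)
  have hinvmono : ∀ y₁ y₂ : ℝ, orliczExp Ψ K ≤ y₁ → y₁ ≤ y₂ → ψinv y₁ ≤ ψinv y₂ := by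
    intro y₁ y₂ h1 h2
    have ha : K ≤ ψinv y₁ := hexists y₁ h1
    have hb : K ≤ ψinv y₂ := hexists y₂ (le_trans h1 h2)
    by_contra hcon
    push_neg at hcon
    have h3 := hψmono _ _ (by linarith) (by linarith) hcon
    have hy₁0 : (0:ℝ) ≤ y₁ := le_trans (hψnonneg K hKpos.le) h1
    rw [hinv2 y₁ hy₁0, hinv2 y₂ (by linarith)] at h3
    linarith
  -- the final constant
  have hψK0 : 0 ≤ orliczExp Ψ K := hψnonneg K hKpos.le
  obtain ⟨Khat, hKhat⟩ : ∃ Khat : ℝ, Khat = 2 * K ^ 2 + orliczExp Ψ K + 2 := ⟨_, rfl⟩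
  have hKhatK : 2 * K ^ 2 ≤ Khat := by rw [hKhat]; linarith
  have hKhat2 : (2:ℝ) ≤ Khat := by nlinarith
  have hKhatpos : (0:ℝ) < Khat := by linarith
  refine ⟨Khat, hKhatpos, ?_⟩
  intro x y hx hy
  have hx2 : (2:ℝ) ≤ x := le_trans hKhat2 hx
  have hy2 : (2:ℝ) ≤ y := le_trans hKhat2 hy
  have hxxy : x ≤ x * y := by nlinarith
  have hyxy : y ≤ x * y := by nlinarith
  have hlog1 : (1:ℝ) ≤ Real.log (1 + x) := by
    have he : Real.exp 1 < 2.7182818286 := Real.exp_one_lt_d9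
    have h1 : Real.exp 1 ≤ 1 + x := by linarith
    calc (1:ℝ) = Real.log (Real.exp 1) := (Real.log_exp 1).symm
      _ ≤ Real.log (1 + x) := Real.log_le_log (Real.exp_pos 1) h1
  have hlogpos : (0:ℝ) < Real.log (1 + x) := by linarith
  have hyψK : orliczExp Ψ K ≤ y := by
    have : orliczExp Ψ K ≤ Khat := by rw [hKhat]; nlinarith
    linarith
  have hxyψK : orliczExp Ψ K ≤ x * y := le_trans hyψK hyxy
  have hu : K ≤ ψinv y := hexists y hyψK
  have hv : K ≤ ψinv (x * y) := hexists (x * y) hxyψK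
  have hu0 : (0:ℝ) ≤ ψinv y := by linarith
  have hv0 : (0:ℝ) ≤ ψinv (x * y) := by linarith
  have hvy : ψinv y ≤ ψinv (x * y) := hinvmono y (x * y) hyψK hyxy
  have h2Klog : (1:ℝ) ≤ 2 * K * Real.log (1 + x) := by nlinarith
  have h2Klogpos : (0:ℝ) < 2 * K * Real.log (1 + x) := by linarith
  obtain ⟨s, hsdef⟩ : ∃ s : ℝ, s = x / (2 * K * Real.log (1 + x)) := ⟨_, rfl⟩
  have hs2K : s * (2 * K * Real.log (1 + x)) = x := by
    rw [hsdef]; field_simp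
  by_cases hcase : K ≤ s
  · -- apply the HJ condition with s and u = ψinv y
    have hspos : 0 < s := lt_of_lt_of_le hKpos hcase
    have hsx : s ≤ x := by
      nlinarith [mul_le_mul_of_nonneg_left h2Klog hspos.le]
    have hHJs := hHJK s (ψinv y) hcase hu
    rw [hinv2 y (by linarith)] at hHJs
    have hlogs : Real.log (1 + s) ≤ Real.log (1 + x) :=
      Real.log_le_log (by linarith) (by linarith)
    have hb1 : s * Real.log (1 + s) ≤ x / (2 * K) := by
      have h1 : s * Real.log (1 + s) ≤ s * Real.log (1 + x) :=
        mul_le_mul_of_nonneg_left hlogs hspos.le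
      have h8 : s * Real.log (1 + x) = x / (2 * K) := by
        rw [eq_div_iff (by positivity)]
        linear_combination hs2K
      linarith
    have hb2 : s * y ≤ x * y / (2 * K) := by
      have hsle : s ≤ x / (2 * K) := by
        rw [le_div_iff₀ (by positivity)]
        nlinarith [hs2K, mul_le_mul_of_nonneg_left hlog1 (mul_nonneg hspos.le (by linarith : (0:ℝ) ≤ 2 * K))]
      calc s * y ≤ (x / (2 * K)) * y := mul_le_mul_of_nonneg_right hsle (by linarith)
        _ = x * y / (2 * K) := by ring
    have hψsu : orliczExp Ψ (s * ψinv y) ≤ x * y := by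
      have h1 : K * (s * Real.log (1 + s) + s * y) ≤ K * (x / (2 * K) + x * y / (2 * K)) := by
        apply mul_le_mul_of_nonneg_left _ hKpos.le
        linarith
      have h9 : K * (x / (2 * K) + x * y / (2 * K)) = (x + x * y) / 2 := by
        field_simp
      rw [h9] at h1
      linarith [hHJs]
    have hsu0 : 0 ≤ s * ψinv y := mul_nonneg hspos.le hu0
    have hsule : s * ψinv y ≤ ψinv (x * y) := by
      by_contra hcon
      push_neg at hcon
      have h1 := hψmono _ _ hv0 hsu0 hcon
      rw [hinv2 (x * y) (by linarith)] at h1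
      linarith
    have hmain : x * ψinv y ≤ (2 * K * Real.log (1 + x)) * ψinv (x * y) := by
      calc x * ψinv y = (s * (2 * K * Real.log (1 + x))) * ψinv y := by rw [hs2K]
        _ = (2 * K * Real.log (1 + x)) * (s * ψinv y) := by ring
        _ ≤ (2 * K * Real.log (1 + x)) * ψinv (x * y) :=
            mul_le_mul_of_nonneg_left hsule h2Klogpos.le
    have hKh : 2 * K ≤ Khat := by nlinarith
    calc x * ψinv y ≤ (2 * K * Real.log (1 + x)) * ψinv (x * y) := hmain
      _ ≤ Khat * Real.log (1 + x) * ψinv (x * y) := by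
          apply mul_le_mul_of_nonneg_right _ hv0
          apply mul_le_mul_of_nonneg_right hKh hlogpos.le
  · -- trivial case: x < 2K² log(1+x)
    push_neg at hcase
    rw [hsdef, div_lt_iff₀ h2Klogpos] at hcase
    have h10 : x ≤ 2 * K ^ 2 * Real.log (1 + x) := by nlinarith
    calc x * ψinv y ≤ (2 * K ^ 2 * Real.log (1 + x)) * ψinv y :=
          mul_le_mul_of_nonneg_right h10 hu0
      _ ≤ (2 * K ^ 2 * Real.log (1 + x)) * ψinv (x * y) := by
          apply mul_le_mul_of_nonneg_left hvy (by positivity)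
      _ ≤ Khat * Real.log (1 + x) * ψinv (x * y) := by
          apply mul_le_mul_of_nonneg_right _ hv0
          apply mul_le_mul_of_nonneg_right hKhatK hlogpos.le
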